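/- Let n ≥ 2. Let S be uniformly distributed on the 2^n − 1 nonzero elements of (ℤ/2ℤ)^n, and given S = s let J ∈ (ℤ/2ℤ)^n have conditional distribution P(J = j | S = s) = 2^(1−n) if j·s = 0 and 0 if j·s = 1. Then the mutual information I(S;J) = H(J) − H(J|S) equals 1 − (2 − (2^n − 2) log₂((2^n − 1)/(2^n − 2)))/2^n. Moreover H(J|S) = n − 1 and H(J) = (1 − 2/2^n)(n + log₂((2^n − 1)/(2^n − 2))) + (n−1)/2^(n−1). -/

import Mathlib

open Finset

/-- Conditional outcome distribution of one pure-state Simon query given period `s`: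
`P(J = j | S = s) = 2^(1-n)` if `j·s = 0` and `0` otherwise. -/
noncomputable def simonCond (n : ℕ) (s j : Fin n → ZMod 2) : ℝ :=
  if ∑ i, j i * s i = 0 then (2 : ℝ) ^ ((1 : ℤ) - n) else 0

/-- Marginal distribution of the outcome `J` when the period `S` is uniform on the
`2^n - 1` nonzero elements of `(ℤ/2ℤ)ⁿ`. -/
noncomputable def simonMarginal (n : ℕ) (j : Fin n → ZMod 2) : ℝ :=
  ∑ s ∈ univ.filter fun s : Fin n → ZMod 2 => s ≠ 0,
    (1 / ((2 : ℝ) ^ n - 1)) * simonCond n s j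

/-- The entropy `H(J)` of the outcome of one pure-state Simon query. -/
noncomputable def simonHJ (n : ℕ) : ℝ :=
  -∑ j : Fin n → ZMod 2, simonMarginal n j * Real.logb 2 (simonMarginal n j)

/-- The conditional entropy `H(J|S) = Σ_s P(S = s) H(J | S = s)`. -/
noncomputable def simonHJS (n : ℕ) : ℝ :=
  ∑ s ∈ univ.filter fun s : Fin n → ZMod 2 => s ≠ 0,
    (1 / ((2 : ℝ) ^ n - 1)) *
      (-∑ j : Fin n → ZMod 2, simonCond n s j * Real.logb 2 (simonCond n s j))

lemma simon_zmod2_eq_one : ∀ {a : ZMod 2}, a ≠ 0 → a = 1 := by decide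

lemma simon_zmod2_iff : ∀ x : ZMod 2, (x = 0 ↔ ¬(x + 1 = 0)) := by decide

lemma simon_card_ker (n : ℕ) (s : Fin n → ZMod 2) (hs : s ≠ 0) :
    (univ.filter fun j : Fin n → ZMod 2 => ∑ i, j i * s i = 0).card = 2 ^ (n - 1) := by
  obtain ⟨i₀, hi₀⟩ : ∃ i, s i ≠ 0 := by
    by_contra h
    push_neg at h
    exact hs (funext h)
  have hs1 : s i₀ = 1 := simon_zmod2_eq_one hi₀
  set v : Fin n → ZMod 2 := Pi.single i₀ 1 with hv
  have hvsum : ∀ j : Fin n → ZMod 2, ∑ i, (j + v) i * s i = (∑ i, j i * s i) + 1 := by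
    intro j
    have h1 : ∑ i, v i * s i = 1 := by
      rw [Finset.sum_eq_single i₀]
      · simp [hv, hs1]
      · intro b _ hb; simp [hv, Pi.single_eq_of_ne hb]
      · simp
    simp only [Pi.add_apply, add_mul, Finset.sum_add_distrib, h1]
  have hcard_eq : (univ.filter fun j : Fin n → ZMod 2 => ∑ i, j i * s i = 0).card =
      (univ.filter fun j : Fin n → ZMod 2 => ¬ (∑ i, j i * s i = 0)).card := by
    apply Finset.card_equiv (Equiv.addRight v)
    intro j
    simp only [Finset.mem_filter, Finset.mem_univ, true_and, Equiv.coe_addRight]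
    rw [hvsum j]
    exact simon_zmod2_iff _
  have hsplit := Finset.card_filter_add_card_filter_not
    (s := (univ : Finset (Fin n → ZMod 2)))
    (p := fun j : Fin n → ZMod 2 => ∑ i, j i * s i = 0)
  have hcu : (univ : Finset (Fin n → ZMod 2)).card = 2 ^ n := by
    simp [Finset.card_univ]
  have hn0 : n ≠ 0 := by
    rintro rfl
    exact hs (funext fun i => i.elim0)
  have hpow : 2 ^ n = 2 ^ (n - 1) * 2 := by
    clear hvsum hv hs1 hi₀ hs hsplit hcard_eq v hcu
    rw [← pow_succ]; congr 1; omega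
  have key : (univ.filter fun j : Fin n → ZMod 2 => ∑ i, j i * s i = 0).card * 2
      = 2 ^ (n - 1) * 2 := by
    rw [mul_two]
    nth_rewrite 2 [hcard_eq]
    rw [hsplit, hcu, hpow]
  exact Nat.eq_of_mul_eq_mul_right (by norm_num) key

lemma simon_card_s (n : ℕ) (j : Fin n → ZMod 2) (hj : j ≠ 0) :
    ((univ.filter fun s : Fin n → ZMod 2 => s ≠ 0).filter fun s => ∑ i, j i * s i = 0).card
      = 2 ^ (n - 1) - 1 := by
  have hker : (univ.filter fun s : Fin n → ZMod 2 => ∑ i, j i * s i = 0).card = 2 ^ (n - 1) := by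
    have hset : (univ.filter fun s : Fin n → ZMod 2 => ∑ i, j i * s i = 0)
        = (univ.filter fun s : Fin n → ZMod 2 => ∑ i, s i * j i = 0) := by
      ext x
      simp [mul_comm]
    rw [hset]
    exact simon_card_ker n j hj
  have h0mem : (0 : Fin n → ZMod 2) ∈
      univ.filter fun s : Fin n → ZMod 2 => ∑ i, j i * s i = 0 := by simp
  have heq : (univ.filter fun s : Fin n → ZMod 2 => s ≠ 0).filter
        (fun s => ∑ i, j i * s i = 0)
      = (univ.filter fun s : Fin n → ZMod 2 => ∑ i, j i * s i = 0).erase 0 := by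
    ext x
    simp only [Finset.mem_filter, Finset.mem_univ, true_and, Finset.mem_erase]
  rw [heq, Finset.card_erase_of_mem h0mem, hker]

/-- For one pure-state Simon query with uniformly random nonzero period `S`:
`H(J|S) = n - 1`, `H(J) = (1 - 2/2^n)(n + log₂((2^n-1)/(2^n-2))) + (n-1)/2^(n-1)`, and
the mutual information `I(S;J) = H(J) - H(J|S)` equals
`1 - (2 - (2^n - 2) log₂((2^n-1)/(2^n-2)))/2^n`, which is almost one bit. -/
theorem simon_pure_mutual_information (n : ℕ) (hn : 2 ≤ n) :
    simonHJS n = n - 1 ∧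
    simonHJ n = (1 - 2 / 2 ^ n) *
        (n + Real.logb 2 (((2 : ℝ) ^ n - 1) / ((2 : ℝ) ^ n - 2))) +
      ((n : ℝ) - 1) / 2 ^ (n - 1) ∧
    simonHJ n - simonHJS n =
      1 - (2 - ((2 : ℝ) ^ n - 2) *
        Real.logb 2 (((2 : ℝ) ^ n - 1) / ((2 : ℝ) ^ n - 2))) / 2 ^ n := by
  have hn0 : n ≠ 0 := by omega
  have h4 : (4:ℝ) ≤ 2 ^ n := by
    calc (4:ℝ) = 2 ^ 2 := by norm_num
      _ ≤ 2 ^ n := by exact pow_le_pow_right₀ (by norm_num) hn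
  have hTpos : (0:ℝ) < 2 ^ n := by positivity
  have hT1 : (0:ℝ) < 2 ^ n - 1 := by linarith
  have hT2 : (0:ℝ) < 2 ^ n - 2 := by linarith
  have hUpos : (0:ℝ) < 2 ^ (n - 1) := by positivity
  have hpowR : (2:ℝ) ^ (n - 1) * 2 = 2 ^ n := by
    rw [← pow_succ]; congr 1; omega
  have hc : (2:ℝ) ^ ((1:ℤ) - n) = 2 / 2 ^ n := by
    rw [zpow_sub₀ (by norm_num : (2:ℝ) ≠ 0), zpow_one, zpow_natCast]
  have hlogT : Real.logb 2 ((2:ℝ) ^ n) = n := by simp [Real.logb_pow]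
  have hlogc : Real.logb 2 (2 / (2:ℝ) ^ n) = 1 - n := by
    rw [Real.logb_div (by norm_num) (by positivity),
      Real.logb_self_eq_one (by norm_num), hlogT]
  have hcards : (univ.filter fun s : Fin n → ZMod 2 => s ≠ 0).card = 2 ^ n - 1 := by
    rw [Finset.filter_ne', Finset.card_erase_of_mem (mem_univ _), Finset.card_univ]
    simp
  have hcast1 : ((2 ^ n - 1 : ℕ) : ℝ) = 2 ^ n - 1 := by
    rw [Nat.cast_sub Nat.one_le_two_pow]
    push_cast
    ring
  have hcast2 : ((2 ^ (n - 1) - 1 : ℕ) : ℝ) = 2 ^ (n - 1) - 1 := by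
    rw [Nat.cast_sub Nat.one_le_two_pow]
    push_cast
    ring
  -- conditional entropy per value of s
  have hHs : ∀ s : Fin n → ZMod 2, s ≠ 0 →
      (∑ j : Fin n → ZMod 2, simonCond n s j * Real.logb 2 (simonCond n s j))
        = -((n:ℝ) - 1) := by
    intro s hs
    have hterm : ∀ j : Fin n → ZMod 2,
        simonCond n s j * Real.logb 2 (simonCond n s j) =
        if ∑ i, j i * s i = 0 then (2 / 2 ^ n) * Real.logb 2 (2 / (2:ℝ) ^ n) else 0 := by
      intro j
      unfold simonCond
      rw [hc]
      split_ifs <;> simp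
    rw [Finset.sum_congr rfl fun j _ => hterm j, Finset.sum_ite, Finset.sum_const,
      Finset.sum_const_zero, add_zero, nsmul_eq_mul, simon_card_ker n s hs, hlogc]
    push_cast
    calc ((2:ℝ) ^ (n - 1)) * (2 / 2 ^ n * (1 - n))
        = (2 ^ (n - 1) * 2) / 2 ^ n * (1 - n) := by ring
      _ = -((n:ℝ) - 1) := by rw [hpowR, div_self hTpos.ne']; ring
  have hHJS : simonHJS n = n - 1 := by
    unfold simonHJS
    rw [Finset.sum_congr rfl (fun s hs => by
      rw [hHs s (by simpa using (Finset.mem_filter.mp hs).2), neg_neg])]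
    rw [Finset.sum_const, hcards, nsmul_eq_mul, hcast1]
    field_simp
  -- marginals
  have hm0 : simonMarginal n 0 = 2 / 2 ^ n := by
    unfold simonMarginal simonCond
    simp only [Pi.zero_apply, zero_mul, Finset.sum_const_zero, if_true]
    rw [Finset.sum_const, hcards, nsmul_eq_mul, hcast1, hc]
    field_simp
  have hm1 : ∀ j : Fin n → ZMod 2, j ≠ 0 →
      simonMarginal n j = ((2:ℝ) ^ n - 2) / (((2:ℝ) ^ n - 1) * 2 ^ n) := by
    intro j hj
    unfold simonMarginal simonCond
    simp only [mul_ite, mul_zero]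
    rw [Finset.sum_ite, Finset.sum_const, Finset.sum_const_zero, add_zero, nsmul_eq_mul,
      simon_card_s n j hj, hcast2, hc]
    rw [← hpowR]
    have hT1' : (0:ℝ) < 2 ^ (n - 1) * 2 - 1 := by rw [hpowR]; exact hT1
    field_simp
  -- entropy of J
  set A := Real.logb 2 ((2:ℝ) ^ n - 1) with hA
  set B := Real.logb 2 ((2:ℝ) ^ n - 2) with hB
  have hlogQ : Real.logb 2 (((2:ℝ) ^ n - 1) / ((2:ℝ) ^ n - 2)) = A - B :=
    Real.logb_div hT1.ne' hT2.ne'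
  have hlogm : Real.logb 2 (((2:ℝ) ^ n - 2) / (((2:ℝ) ^ n - 1) * 2 ^ n)) = B - (A + n) := by
    rw [Real.logb_div hT2.ne' (by positivity), Real.logb_mul hT1.ne' (by positivity), hlogT]
  have hHJ : simonHJ n = (1 - 2 / 2 ^ n) *
      (n + Real.logb 2 (((2 : ℝ) ^ n - 1) / ((2 : ℝ) ^ n - 2))) +
      ((n : ℝ) - 1) / 2 ^ (n - 1) := by
    unfold simonHJ
    rw [← Finset.sum_erase_add _ _ (Finset.mem_univ (0 : Fin n → ZMod 2))]
    rw [Finset.sum_congr rfl (fun j hj => by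
      rw [hm1 j (Finset.mem_erase.mp hj).1])]
    rw [Finset.sum_const, Finset.card_erase_of_mem (Finset.mem_univ _), Finset.card_univ,
      nsmul_eq_mul, hm0, hlogc, hlogm, hlogQ]
    have hcast3 : ((Fintype.card (Fin n → ZMod 2) - 1 : ℕ) : ℝ) = 2 ^ n - 1 := by
      simp only [Fintype.card_fun, ZMod.card, Fintype.card_fin]
      exact hcast1
    rw [hcast3]
    rw [← hpowR]
    have hT1' : ((2:ℝ) ^ (n - 1) * 2 - 1) ≠ 0 := by rw [hpowR]; exact hT1.ne'
    have hT2' : ((2:ℝ) ^ (n - 1) * 2 - 2) ≠ 0 := by rw [hpowR]; exact hT2.ne'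
    field_simp [hUpos.ne', hT1', hT2']
    ring
  refine ⟨hHJS, hHJ, ?_⟩
  rw [hHJS, hHJ, hlogQ, ← hpowR]
  have hT1' : ((2:ℝ) ^ (n - 1) * 2 - 1) ≠ 0 := by rw [hpowR]; exact hT1.ne'
  have hT2' : ((2:ℝ) ^ (n - 1) * 2 - 2) ≠ 0 := by rw [hpowR]; exact hT2.ne'
  field_simp [hUpos.ne', hT1', hT2']
  ring
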